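/- Let 𝕜 be a field, A, B, C vector spaces over 𝕜, and v ∈ A ⊗ B ⊗ C. Then the minimal subspace of v relative to the block A ⊗ B is contained in the tensor product of the minimal subspaces of the individual factors: U_{AB}(v) ≤ the image of U_A(v) ⊗ U_B(v) in A ⊗ B under the canonical map induced by the inclusions U_A(v) ↪ A and U_B(v) ↪ B. -/

import Mathlib

open scoped TensorProduct

section
variable (𝕜 : Type*) [Field 𝕜]

/-- The contraction `id_V ⊗ φ : V ⊗ W → V`, sending `x ⊗ y` to `φ(y) • x`. -/
noncomputable def rContract (V W : Type*) [AddCommGroup V] [Module 𝕜 V]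
    [AddCommGroup W] [Module 𝕜 W] (φ : W →ₗ[𝕜] 𝕜) : V ⊗[𝕜] W →ₗ[𝕜] V :=
  (TensorProduct.rid 𝕜 V).toLinearMap ∘ₗ TensorProduct.map LinearMap.id φ

/-- The contraction `ψ ⊗ id_W : V ⊗ W → W`, sending `x ⊗ y` to `ψ(x) • y`. -/
noncomputable def lContract (V W : Type*) [AddCommGroup V] [Module 𝕜 V]
    [AddCommGroup W] [Module 𝕜 W] (ψ : V →ₗ[𝕜] 𝕜) : V ⊗[𝕜] W →ₗ[𝕜] W :=
  (TensorProduct.lid 𝕜 W).toLinearMap ∘ₗ TensorProduct.map ψ LinearMap.id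

/-- The left minimal subspace `U_V(v)` of `v ∈ V ⊗ W`: the span of all contractions
`(id_V ⊗ φ)(v)` with `φ` in the algebraic dual of `W`. -/
noncomputable def leftMin (V W : Type*) [AddCommGroup V] [Module 𝕜 V]
    [AddCommGroup W] [Module 𝕜 W] (v : V ⊗[𝕜] W) : Submodule 𝕜 V :=
  Submodule.span 𝕜 {x | ∃ φ : W →ₗ[𝕜] 𝕜, rContract 𝕜 V W φ v = x}

/-- The right minimal subspace `U_W(v)` of `v ∈ V ⊗ W`: the span of all contractions
`(ψ ⊗ id_W)(v)` with `ψ` in the algebraic dual of `V`. -/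
noncomputable def rightMin (V W : Type*) [AddCommGroup V] [Module 𝕜 V]
    [AddCommGroup W] [Module 𝕜 W] (v : V ⊗[𝕜] W) : Submodule 𝕜 W :=
  Submodule.span 𝕜 {y | ∃ ψ : V →ₗ[𝕜] 𝕜, lContract 𝕜 V W ψ v = y}

end

section
variable (𝕜 A B C : Type*) [Field 𝕜] [AddCommGroup A] [Module 𝕜 A]
  [AddCommGroup B] [Module 𝕜 B] [AddCommGroup C] [Module 𝕜 C]

/-- The minimal subspace `U_{AB}(v) ≤ A ⊗ B` of `v ∈ (A ⊗ B) ⊗ C`. -/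
noncomputable def minAB (v : (A ⊗[𝕜] B) ⊗[𝕜] C) : Submodule 𝕜 (A ⊗[𝕜] B) :=
  leftMin 𝕜 (A ⊗[𝕜] B) C v

/-- The minimal subspace `U_A(v) ≤ A` of `v ∈ (A ⊗ B) ⊗ C`, obtained by contracting
`B ⊗ C` via the associativity isomorphism. -/
noncomputable def minA (v : (A ⊗[𝕜] B) ⊗[𝕜] C) : Submodule 𝕜 A :=
  leftMin 𝕜 A (B ⊗[𝕜] C) (TensorProduct.assoc 𝕜 A B C v)

/-- The minimal subspace `U_B(v) ≤ B` of `v ∈ (A ⊗ B) ⊗ C`, obtained by contracting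
the factors `A` and `C`. -/
noncomputable def minB (v : (A ⊗[𝕜] B) ⊗[𝕜] C) : Submodule 𝕜 B :=
  Submodule.span 𝕜
    {y | ∃ (ψ : A →ₗ[𝕜] 𝕜) (φ : C →ₗ[𝕜] 𝕜),
      lContract 𝕜 A B ψ (rContract 𝕜 (A ⊗[𝕜] B) C φ v) = y}

end
section Aux
variable {𝕜 V W : Type*} [Field 𝕜] [AddCommGroup V] [Module 𝕜 V]
  [AddCommGroup W] [Module 𝕜 W]

@[simp] lemma rContract_tmul (φ : W →ₗ[𝕜] 𝕜) (x : V) (y : W) :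
    rContract 𝕜 V W φ (x ⊗ₜ[𝕜] y) = φ y • x := by
  simp [rContract]

@[simp] lemma lContract_tmul (ψ : V →ₗ[𝕜] 𝕜) (x : V) (y : W) :
    lContract 𝕜 V W ψ (x ⊗ₜ[𝕜] y) = ψ x • y := by
  simp [lContract]

lemma sum_repr_subset {ι M : Type*} [AddCommGroup M] [Module 𝕜 M] (b : Module.Basis ι 𝕜 M)
    (u : M) (T : Finset ι) (hT : (b.repr u).support ⊆ T) :
    ∑ i ∈ T, b.repr u i • b i = u := by
  rw [← Finset.sum_subset hT (fun i _ hi => by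
    simp [Finsupp.notMem_support_iff.mp hi])]
  conv_rhs => rw [← b.linearCombination_repr u]
  rw [Finsupp.linearCombination_apply, Finsupp.sum]

lemma exists_repr {ι : Type*} (b : Module.Basis ι 𝕜 W) (w : V ⊗[𝕜] W) :
    ∃ s : Finset ι, (∀ j ∉ s, rContract 𝕜 V W (b.coord j) w = 0) ∧
      w = ∑ j ∈ s, rContract 𝕜 V W (b.coord j) w ⊗ₜ[𝕜] b j := by
  classical
  induction w with
  | zero => exact ⟨∅, by simp, by simp⟩
  | tmul x y =>
    refine ⟨(b.repr y).support, fun j hj => ?_, ?_⟩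
    · simp [Module.Basis.coord_apply, Finsupp.notMem_support_iff.mp hj]
    · simp only [rContract_tmul, Module.Basis.coord_apply]
      calc x ⊗ₜ[𝕜] y = x ⊗ₜ[𝕜] (∑ j ∈ (b.repr y).support, b.repr y j • b j) := by
            rw [sum_repr_subset b y _ (le_refl _)]
        _ = ∑ j ∈ (b.repr y).support, (b.repr y j • x) ⊗ₜ[𝕜] b j := by
            rw [TensorProduct.tmul_sum]
            exact Finset.sum_congr rfl fun j _ => by
              rw [TensorProduct.tmul_smul, TensorProduct.smul_tmul']
  | add w₁ w₂ h1 h2 =>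
    obtain ⟨s₁, hv₁, hs₁⟩ := h1
    obtain ⟨s₂, hv₂, hs₂⟩ := h2
    refine ⟨s₁ ∪ s₂, fun j hj => ?_, ?_⟩
    · rw [Finset.mem_union] at hj
      push_neg at hj
      rw [map_add, hv₁ j hj.1, hv₂ j hj.2, add_zero]
    · have e1 : w₁ = ∑ j ∈ s₁ ∪ s₂, rContract 𝕜 V W (b.coord j) w₁ ⊗ₜ[𝕜] b j := by
        conv_lhs => rw [hs₁]
        exact Finset.sum_subset Finset.subset_union_left
          (fun j _ hj => by rw [hv₁ j hj, TensorProduct.zero_tmul])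
      have e2 : w₂ = ∑ j ∈ s₁ ∪ s₂, rContract 𝕜 V W (b.coord j) w₂ ⊗ₜ[𝕜] b j := by
        conv_lhs => rw [hs₂]
        exact Finset.sum_subset Finset.subset_union_right
          (fun j _ hj => by rw [hv₂ j hj, TensorProduct.zero_tmul])
      calc w₁ + w₂ = ∑ j ∈ s₁ ∪ s₂,
            (rContract 𝕜 V W (b.coord j) w₁ ⊗ₜ[𝕜] b j
              + rContract 𝕜 V W (b.coord j) w₂ ⊗ₜ[𝕜] b j) := by
            rw [Finset.sum_add_distrib, ← e1, ← e2]
        _ = _ := Finset.sum_congr rfl fun j _ => by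
            rw [map_add, TensorProduct.add_tmul]

/-- Any tensor lies in the image of the tensor product of its minimal subspaces. -/
lemma mem_range_map_min (w : V ⊗[𝕜] W) :
    w ∈ LinearMap.range (TensorProduct.map (leftMin 𝕜 V W w).subtype
      (rightMin 𝕜 V W w).subtype) := by
  classical
  set U := leftMin 𝕜 V W w with hU
  set P := rightMin 𝕜 V W w with hP
  obtain ⟨s, _, hw⟩ := exists_repr (Module.Basis.ofVectorSpace 𝕜 W) w
  set b := Module.Basis.ofVectorSpace 𝕜 W
  have hxU : ∀ j, rContract 𝕜 V W (b.coord j) w ∈ U :=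
    fun j => Submodule.subset_span ⟨_, rfl⟩
  set u : _ → U := fun j => (⟨rContract 𝕜 V W (b.coord j) w, hxU j⟩ : U) with hu
  set c := Module.Basis.ofVectorSpace 𝕜 U with hc
  obtain ⟨Q, hQ⟩ := U.exists_isCompl
  set π : V →ₗ[𝕜] U := U.projectionOnto Q hQ with hπ
  set T : Finset _ := s.biUnion (fun j => (c.repr (u j)).support) with hT
  set y : _ → W := fun i => ∑ j ∈ s, c.repr (u j) i • b j with hy
  have hyP : ∀ i, y i ∈ P := by
    intro i
    refine Submodule.subset_span ⟨(c.coord i) ∘ₗ π, ?_⟩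
    conv_lhs => rw [hw]
    rw [map_sum]
    refine Finset.sum_congr rfl fun j _ => ?_
    have : π (rContract 𝕜 V W (b.coord j) w) = u j :=
      Submodule.projectionOnto_apply_left hQ (u j)
    rw [lContract_tmul]
    simp only [LinearMap.comp_apply, this, Module.Basis.coord_apply]
  have hw2 : w = ∑ i ∈ T, (c i : V) ⊗ₜ[𝕜] y i := by
    conv_lhs => rw [hw]
    have hx : ∀ j ∈ s, rContract 𝕜 V W (b.coord j) w
        = ∑ i ∈ T, c.repr (u j) i • (c i : V) := by
      intro j hj
      have : (u j : V) = ((∑ i ∈ T, c.repr (u j) i • c i : U) : V) := by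
        rw [sum_repr_subset c (u j) T (Finset.subset_biUnion_of_mem (fun j => (c.repr (u j)).support) hj)]
      simpa using this
    calc ∑ j ∈ s, rContract 𝕜 V W (b.coord j) w ⊗ₜ[𝕜] b j
        = ∑ j ∈ s, ∑ i ∈ T, (c.repr (u j) i • (c i : V)) ⊗ₜ[𝕜] b j := by
          refine Finset.sum_congr rfl fun j hj => ?_
          rw [hx j hj, TensorProduct.sum_tmul]
      _ = ∑ i ∈ T, ∑ j ∈ s, (c.repr (u j) i • (c i : V)) ⊗ₜ[𝕜] b j :=
          Finset.sum_comm
      _ = ∑ i ∈ T, (c i : V) ⊗ₜ[𝕜] y i := by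
          refine Finset.sum_congr rfl fun i _ => ?_
          rw [hy, TensorProduct.tmul_sum]
          exact Finset.sum_congr rfl fun j _ => by
            exact TensorProduct.smul_tmul _ _ _
  rw [hw2]
  refine Submodule.sum_mem _ fun i _ => ?_
  exact ⟨c i ⊗ₜ[𝕜] (⟨y i, hyP i⟩ : P), by simp [TensorProduct.map_tmul]⟩

lemma range_map_subtype_mono {U U' : Submodule 𝕜 V} {P P' : Submodule 𝕜 W}
    (hU : U ≤ U') (hP : P ≤ P') :
    LinearMap.range (TensorProduct.map U.subtype P.subtype) ≤
      LinearMap.range (TensorProduct.map U'.subtype P'.subtype) := by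
  have h1 : U.subtype = U'.subtype ∘ₗ Submodule.inclusion hU := rfl
  have h2 : P.subtype = P'.subtype ∘ₗ Submodule.inclusion hP := rfl
  rw [h1, h2, TensorProduct.map_comp]
  exact LinearMap.range_comp_le_range _ _

end Aux

section Assoc
variable {𝕜 A B C : Type*} [Field 𝕜] [AddCommGroup A] [Module 𝕜 A]
  [AddCommGroup B] [Module 𝕜 B] [AddCommGroup C] [Module 𝕜 C]

lemma assoc_contract (v : (A ⊗[𝕜] B) ⊗[𝕜] C) (ψ : B →ₗ[𝕜] 𝕜) (φ : C →ₗ[𝕜] 𝕜) :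
    rContract 𝕜 A (B ⊗[𝕜] C)
      ((TensorProduct.lid 𝕜 𝕜).toLinearMap ∘ₗ TensorProduct.map ψ φ)
      (TensorProduct.assoc 𝕜 A B C v)
      = rContract 𝕜 A B ψ (rContract 𝕜 (A ⊗[𝕜] B) C φ v) := by
  induction v with
  | zero => simp
  | add x y hx hy => rw [map_add, map_add, map_add, map_add, hx, hy]
  | tmul x c =>
    induction x with
    | zero => simp
    | add x y hx hy =>
      simp only [TensorProduct.add_tmul, map_add, hx, hy]
    | tmul a b =>
      simp [smul_smul, mul_comm]

end Assoc

section
variable {𝕜 A B C : Type*} [Field 𝕜] [AddCommGroup A] [Module 𝕜 A]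
  [AddCommGroup B] [Module 𝕜 B] [AddCommGroup C] [Module 𝕜 C]

/-- **Nestedness of minimal subspaces.**
For `v ∈ A ⊗ B ⊗ C`, the minimal subspace of the block `A ⊗ B` is contained in the
image of `U_A(v) ⊗ U_B(v)` in `A ⊗ B` under the canonical map induced by inclusions. -/
theorem minAB_le_range_map_minA_minB (v : (A ⊗[𝕜] B) ⊗[𝕜] C) :
    minAB 𝕜 A B C v ≤
      LinearMap.range
        (TensorProduct.map (minA 𝕜 A B C v).subtype (minB 𝕜 A B C v).subtype) := by
  rw [minAB, leftMin, Submodule.span_le]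
  rintro w ⟨φ, rfl⟩
  have key := mem_range_map_min (𝕜 := 𝕜) (rContract 𝕜 (A ⊗[𝕜] B) C φ v)
  have h1 : leftMin 𝕜 A B (rContract 𝕜 (A ⊗[𝕜] B) C φ v) ≤ minA 𝕜 A B C v := by
    rw [leftMin, Submodule.span_le]
    rintro x ⟨ψ, rfl⟩
    exact Submodule.subset_span ⟨_, assoc_contract v ψ φ⟩
  have h2 : rightMin 𝕜 A B (rContract 𝕜 (A ⊗[𝕜] B) C φ v) ≤ minB 𝕜 A B C v := by
    rw [rightMin, Submodule.span_le]
    rintro y ⟨ψ, rfl⟩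
    exact Submodule.subset_span ⟨ψ, φ, rfl⟩
  exact range_map_subtype_mono h1 h2 key

end
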